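/- Let g : [0,1] → [0,1] be weakly increasing, right-continuous, with g(x) ≥ x everywhere, and define F₊(t) = λ{x : 1 − g(x) ≤ t}. Then g can be recovered from F₊ by the inversion formula g(x) = 1 − min{t : 1 − F₊(t) ≤ x} = max{s : F₊(1 − s) ≥ 1 − x} for all x ∈ [0,1]. -/

import Mathlib

open MeasureTheory

/-- For `g : [0,1] → [0,1]` weakly increasing, right-continuous, with `g(x) ≥ x`, and
`F₊(t) = λ{x ∈ [0,1] : 1 − g(x) ≤ t}`, the function `g` is recovered by the inversion
formula `g(x) = 1 − min{t : 1 − F₊(t) ≤ x} = max{s : F₊(1 − s) ≥ 1 − x}`. -/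
theorem inversion_formula (g : ℝ → ℝ)
    (hmono : MonotoneOn g (Set.Icc (0:ℝ) 1))
    (hrc : ∀ x ∈ Set.Ico (0:ℝ) 1, ContinuousWithinAt g (Set.Ici x) x)
    (hmem : ∀ x ∈ Set.Icc (0:ℝ) 1, g x ∈ Set.Icc (0:ℝ) 1)
    (hge : ∀ x ∈ Set.Icc (0:ℝ) 1, x ≤ g x) :
    ∀ x ∈ Set.Icc (0:ℝ) 1,
      g x = 1 - sInf {t ∈ Set.Icc (0:ℝ) 1 |
          1 - (volume {u ∈ Set.Icc (0:ℝ) 1 | 1 - g u ≤ t}).toReal ≤ x} ∧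
      g x = sSup {s ∈ Set.Icc (0:ℝ) 1 |
          1 - x ≤ (volume {u ∈ Set.Icc (0:ℝ) 1 | 1 - g u ≤ 1 - s}).toReal} := by
  intro x hx
  set F : ℝ → ℝ := fun t => (volume {u ∈ Set.Icc (0:ℝ) 1 | 1 - g u ≤ t}).toReal with hF
  have hfin : ∀ t : ℝ, volume {u ∈ Set.Icc (0:ℝ) 1 | 1 - g u ≤ t} ≠ ⊤ := by
    intro t
    have hsub : {u ∈ Set.Icc (0:ℝ) 1 | 1 - g u ≤ t} ⊆ Set.Icc (0:ℝ) 1 :=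
      fun u hu => hu.1
    have := measure_mono (μ := volume) hsub
    have hIcc : volume (Set.Icc (0:ℝ) 1) = ENNReal.ofReal 1 := by
      rw [Real.volume_Icc]; norm_num
    exact ne_top_of_le_ne_top (by rw [hIcc]; exact ENNReal.ofReal_ne_top) this
  have hgx : g x ∈ Set.Icc (0:ℝ) 1 := hmem x hx
  -- g x is in the sSup set
  have hmemT : 1 - x ≤ F (1 - g x) := by
    have hsub : Set.Icc x 1 ⊆ {u ∈ Set.Icc (0:ℝ) 1 | 1 - g u ≤ 1 - g x} := by
      intro u hu
      have hu01 : u ∈ Set.Icc (0:ℝ) 1 := ⟨le_trans hx.1 hu.1, hu.2⟩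
      have := hmono hx hu01 hu.1
      exact ⟨hu01, by linarith⟩
    have hmle := measure_mono (μ := volume) hsub
    have h1 : (volume (Set.Icc x 1)).toReal = 1 - x := by
      rw [Real.volume_Icc, ENNReal.toReal_ofReal (by linarith [hx.2])]
    calc 1 - x = (volume (Set.Icc x 1)).toReal := h1.symm
      _ ≤ F (1 - g x) := ENNReal.toReal_mono (hfin _) hmle
  -- g x is an upper bound for the sSup set
  have hub : ∀ s ∈ Set.Icc (0:ℝ) 1, 1 - x ≤ F (1 - s) → s ≤ g x := by
    intro s hs hFs
    by_contra hcon
    push_neg at hcon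
    rcases eq_or_lt_of_le hx.2 with hx1 | hx1
    · -- x = 1 : g x = 1 ≥ s, contradiction
      have h1 : (1:ℝ) ≤ g x := hx1.symm.le.trans (hge x hx)
      linarith [hs.2]
    · -- x < 1 : use right continuity
      have hrcx := hrc x ⟨hx.1, hx1⟩
      have hev : g ⁻¹' Set.Iio s ∈ nhdsWithin x (Set.Ici x) :=
        hrcx (Iio_mem_nhds hcon)
      rcases mem_nhdsGE_iff_exists_Ico_subset.mp hev with ⟨e, he, hsub⟩
      set y : ℝ := min e 1 with hy
      have hxy : x < y := lt_min he hx1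
      have hy1 : y ≤ 1 := min_le_right _ _
      have hAsub : {u ∈ Set.Icc (0:ℝ) 1 | 1 - g u ≤ 1 - s} ⊆ Set.Icc y 1 := by
        intro u hu
        obtain ⟨hu01, hgu⟩ := hu
        have hsgu : s ≤ g u := by linarith
        refine ⟨?_, hu01.2⟩
        by_contra huy
        push_neg at huy
        rcases le_or_gt x u with hxu | hux
        · have : u ∈ Set.Ico x e := ⟨hxu, lt_of_lt_of_le huy (min_le_left _ _)⟩
          have := hsub this
          simp only [Set.mem_preimage, Set.mem_Iio] at this
          linarith
        · have := hmono hu01 hx hux.le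
          linarith
      have hle := ENNReal.toReal_mono (by
          rw [Real.volume_Icc]; exact ENNReal.ofReal_ne_top)
        (measure_mono (μ := volume) hAsub)
      rw [Real.volume_Icc, ENNReal.toReal_ofReal (by linarith)] at hle
      have : F (1 - s) ≤ 1 - y := hle
      linarith
  -- second equality
  have hsup : g x = sSup {s ∈ Set.Icc (0:ℝ) 1 |
      1 - x ≤ (volume {u ∈ Set.Icc (0:ℝ) 1 | 1 - g u ≤ 1 - s}).toReal} := by
    apply le_antisymm
    · exact le_csSup ⟨g x, fun s hs => hub s hs.1 hs.2⟩ ⟨hgx, hmemT⟩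
    · exact csSup_le ⟨g x, hgx, hmemT⟩ (fun s hs => hub s hs.1 hs.2)
  -- first equality
  have hinf : sInf {t ∈ Set.Icc (0:ℝ) 1 |
      1 - (volume {u ∈ Set.Icc (0:ℝ) 1 | 1 - g u ≤ t}).toReal ≤ x} = 1 - g x := by
    have hmem1 : (1 - g x) ∈ {t ∈ Set.Icc (0:ℝ) 1 |
        1 - (volume {u ∈ Set.Icc (0:ℝ) 1 | 1 - g u ≤ t}).toReal ≤ x} :=
      ⟨⟨by linarith [hgx.2], by linarith [hgx.1]⟩, by
        show 1 - F (1 - g x) ≤ x; linarith [hmemT]⟩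
    apply le_antisymm
    · exact csInf_le ⟨0, fun t ht => ht.1.1⟩ hmem1
    · apply le_csInf ⟨1 - g x, hmem1⟩
      intro t ht
      obtain ⟨ht01, htF⟩ := ht
      have htF' : 1 - F t ≤ x := htF
      have hFt : 1 - x ≤ F (1 - (1 - t)) := by
        rw [show (1:ℝ) - (1 - t) = t by ring]; linarith
      have := hub (1 - t) ⟨by linarith [ht01.2], by linarith [ht01.1]⟩ hFt
      linarith
  exact ⟨by linarith [hinf], hsup⟩
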